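/- Theorem C.1, (1)⇔(2): A dataset {p^N}_{N∈𝒩} is consistent with GLM* (the general linear-in-means model allowing π_i^N(i) ≥ 0) if and only if for every agent i ∈ 𝒜 the collection of sets {co⁻¹(Δ(p^N), p_i^N)}_{N∈𝒩_i^{ext}} has a point of mutual intersection, i.e. ⋂_{N∈𝒩_i^{ext}} co⁻¹(Δ(p^N), p_i^N) ≠ ∅ (with the empty intersection convention that this holds vacuously when 𝒩_i^{ext} = ∅, in which case any v ∈ Δ(X) works). -/

import Mathlib

open Finset
open scoped Classical

noncomputable section

/-- The simplex Δ(X) of probability vectors on a finite set X. -/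
def simplex (X : Type*) [Fintype X] : Set (X → ℝ) :=
  {v | (∀ x, 0 ≤ v x) ∧ (∑ x, v x) = 1}

/-- The inverse cone co⁻¹(Δ(p^N), p_i^N). -/
def invCone {X A : Type*} [Fintype X] [DecidableEq A]
    (p : Finset A → A → X → ℝ) (N : Finset A) (i : A) : Set (X → ℝ) :=
  {v | v ∈ simplex X ∧ ∃ γ : A → ℝ, (∀ j ∈ N.erase i, γ j ≤ 0) ∧
    (∑ j ∈ N, γ j) = 1 ∧ v = ∑ j ∈ N, γ j • p N j}

/-- Consistency with GLM*: the general linear-in-means model allowing π_i^N(i) ≥ 0. -/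
def GLMStarConsistent {X A : Type*} [Fintype X] [DecidableEq A]
    (𝒩 : Finset (Finset A)) (p : Finset A → A → X → ℝ) : Prop :=
  ∃ v : A → X → ℝ, (∀ i, v i ∈ simplex X) ∧
    ∀ N ∈ 𝒩, ∀ i ∈ N, ∃ π : A → ℝ,
      (∀ j ∈ N, 0 ≤ π j) ∧ (∑ j ∈ N, π j) = 1 ∧
      p N i = π i • v i + ∑ j ∈ N.erase i, π j • p N j

/-- 𝒩_i^{ext}: the groups containing i in which agent i's choice is not in the convex
hull of the other agents' choices. -/
def Next {X A : Type*} [Fintype X] [DecidableEq A]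
    (𝒩 : Finset (Finset A)) (p : Finset A → A → X → ℝ) (i : A) : Finset (Finset A) :=
  𝒩.filter (fun N => i ∈ N ∧ p N i ∉ convexHull ℝ (p N '' ↑(N.erase i)))

lemma exists_weights_of_mem_convexHull_image {A E : Type*} [DecidableEq A]
    [AddCommGroup E] [Module ℝ E] (s : Finset A) (f : A → E) (x : E)
    (hx : x ∈ convexHull ℝ (f '' ↑s)) :
    ∃ μ : A → ℝ, (∀ j ∈ s, 0 ≤ μ j) ∧ (∑ j ∈ s, μ j) = 1 ∧ x = ∑ j ∈ s, μ j • f j := by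
  rw [← Finset.coe_image, Finset.mem_convexHull'] at hx
  obtain ⟨w, hw0, hw1, hwx⟩ := hx
  set μ : A → ℝ := fun a => w (f a) / (s.filter (fun b => f b = f a)).card with hμ
  have hfib : ∀ y ∈ s.image f, ∀ j ∈ s.filter (fun b => f b = y),
      μ j = w y / (s.filter (fun b => f b = y)).card := by
    intro y hy j hj
    simp only [mem_filter] at hj
    simp [hμ, hj.2]
  have hcard : ∀ y ∈ s.image f, (0:ℝ) < (s.filter (fun b => f b = y)).card := by
    intro y hy
    obtain ⟨a, ha, rfl⟩ := Finset.mem_image.1 hy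
    have : a ∈ s.filter (fun b => f b = f a) := by simp [ha]
    exact_mod_cast Finset.card_pos.2 ⟨a, this⟩
  refine ⟨μ, ?_, ?_, ?_⟩
  · intro j hj
    have h0 : 0 ≤ w (f j) := hw0 _ (Finset.mem_image_of_mem f hj)
    exact div_nonneg h0 (Nat.cast_nonneg _)
  · rw [← Finset.sum_fiberwise_of_maps_to (fun j hj => Finset.mem_image_of_mem f hj) μ]
    rw [← hw1]
    refine Finset.sum_congr rfl fun y hy => ?_
    rw [Finset.sum_congr rfl (hfib y hy), Finset.sum_const, nsmul_eq_mul]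
    have hne := (hcard y hy).ne'
    field_simp
  · rw [← Finset.sum_fiberwise_of_maps_to (fun j hj => Finset.mem_image_of_mem f hj)
      (fun j => μ j • f j), ← hwx]
    refine Finset.sum_congr rfl fun y hy => ?_
    have : ∀ j ∈ s.filter (fun b => f b = y),
        μ j • f j = (w y / (s.filter (fun b => f b = y)).card) • y := by
      intro j hj
      have hje := (Finset.mem_filter.1 hj).2
      rw [hfib y hy j hj, hje]
    rw [Finset.sum_congr rfl this, Finset.sum_const]
    rw [← Nat.cast_smul_eq_nsmul ℝ, smul_smul]
    congr 1
    have hne := (hcard y hy).ne'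
    field_simp

/-- Theorem C.1, (1) ⇔ (2): consistency with GLM* is equivalent to the inverse cones over
𝒩_i^{ext} having a point of mutual intersection, for every agent. -/
theorem glmstar_iff_intersection
    {X A : Type*} [Fintype X] [Fintype A] [DecidableEq A]
    (hX : 2 ≤ Fintype.card X) (hA : 2 ≤ Fintype.card A)
    (𝒩 : Finset (Finset A)) (h𝒩 : 𝒩.Nonempty) (h𝒩' : ∀ N ∈ 𝒩, N.Nonempty)
    (p : Finset A → A → X → ℝ) (hp : ∀ N ∈ 𝒩, ∀ i ∈ N, p N i ∈ simplex X) :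
    GLMStarConsistent 𝒩 p ↔
      ∀ i : A, (⋂ N ∈ Next 𝒩 p i, invCone p N i).Nonempty := by
  constructor
  · rintro ⟨v, hv, hmod⟩ i
    refine ⟨v i, Set.mem_iInter₂.2 fun N hN => ?_⟩
    simp only [Next, Finset.mem_filter] at hN
    obtain ⟨hN𝒩, hiN, hnot⟩ := hN
    obtain ⟨π, hπ0, hπ1, heq⟩ := hmod N hN𝒩 i hiN
    have hπi : π i ≠ 0 := by
      intro h0
      apply hnot
      rw [h0, zero_smul, zero_add] at heq
      have hsum' : ∑ j ∈ N.erase i, π j = 1 := by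
        rw [← Finset.add_sum_erase N π hiN, h0, zero_add] at hπ1
        exact hπ1
      rw [heq, ← Finset.centerMass_eq_of_sum_1 _ _ hsum']
      exact Finset.centerMass_mem_convexHull _
        (fun j hj => hπ0 j (Finset.mem_of_mem_erase hj))
        (by rw [hsum']; norm_num)
        (fun j hj => Set.mem_image_of_mem _ (Finset.mem_coe.2 hj))
    have hπipos : 0 < π i := lt_of_le_of_ne (hπ0 i hiN) (Ne.symm hπi)
    refine ⟨hv i, fun j => if j = i then (π i)⁻¹ else -(π j)/π i, ?_, ?_, ?_⟩
    · intro j hj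
      beta_reduce
      rw [if_neg (Finset.ne_of_mem_erase hj)]
      exact div_nonpos_of_nonpos_of_nonneg
        (neg_nonpos.2 (hπ0 j (Finset.mem_of_mem_erase hj))) hπipos.le
    · beta_reduce
      rw [← Finset.add_sum_erase N _ hiN]
      beta_reduce
      rw [if_pos rfl,
        Finset.sum_congr rfl (fun j hj => if_neg (Finset.ne_of_mem_erase hj))]
      have hers : ∑ j ∈ N.erase i, π j = 1 - π i := by
        rw [← Finset.add_sum_erase N π hiN] at hπ1; linarith
      have : ∑ j ∈ N.erase i, -π j / π i = -(1 - π i)/π i := by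
        rw [← hers, ← Finset.sum_div, Finset.sum_neg_distrib]
      rw [this]
      field_simp
      ring
    · have key : v i = (π i)⁻¹ • (p N i - ∑ j ∈ N.erase i, π j • p N j) := by
        rw [heq, add_sub_cancel_right, smul_smul, inv_mul_cancel₀ hπi, one_smul]
      rw [key, ← Finset.add_sum_erase N _ hiN]
      beta_reduce
      rw [if_pos rfl]
      have hterm : ∀ j ∈ N.erase i,
          (if j = i then (π i)⁻¹ else -π j / π i) • p N j = -((π i)⁻¹ • (π j • p N j)) := by
        intro j hj
        rw [if_neg (Finset.ne_of_mem_erase hj), smul_smul, ← neg_smul]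
        congr 1
        field_simp
      rw [Finset.sum_congr rfl hterm, Finset.sum_neg_distrib, smul_sub, Finset.smul_sum,
        ← sub_eq_add_neg]
  · intro h
    choose w hw using h
    have hXne : Nonempty X := Fintype.card_pos_iff.1 (by omega)
    obtain ⟨x₀⟩ := hXne
    set e : X → ℝ := fun x => if x = x₀ then 1 else 0 with he_def
    have he : e ∈ simplex X := by
      constructor
      · intro x; simp only [he_def]; split <;> norm_num
      · simp [he_def]
    set v : A → X → ℝ := fun i => if w i ∈ simplex X then w i else e with hv_def
    refine ⟨v, fun i => ?_, fun N hN i hiN => ?_⟩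
    · by_cases hwi : w i ∈ simplex X <;> simp [hv_def, hwi, he]
    · by_cases hext : N ∈ Next 𝒩 p i
      · have hwi : w i ∈ invCone p N i := Set.mem_iInter₂.1 (hw i) N hext
        obtain ⟨hwsimp, γ, hγ0, hγ1, hwe⟩ := hwi
        have hvi : v i = w i := by simp [hv_def, hwsimp]
        have hγi : 1 ≤ γ i := by
          have h1 : γ i + ∑ j ∈ N.erase i, γ j = 1 := by
            rw [Finset.add_sum_erase N γ hiN]; exact hγ1
          have h2 : ∑ j ∈ N.erase i, γ j ≤ 0 := Finset.sum_nonpos hγ0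
          linarith
        have hγipos : 0 < γ i := by linarith
        refine ⟨fun j => if j = i then (γ i)⁻¹ else -(γ j)/γ i, ?_, ?_, ?_⟩
        · intro j hj
          beta_reduce
          by_cases hji : j = i
          · rw [if_pos hji]; positivity
          · rw [if_neg hji]
            exact div_nonneg (neg_nonneg.2 (hγ0 j (Finset.mem_erase.2 ⟨hji, hj⟩))) hγipos.le
        · beta_reduce
          rw [← Finset.add_sum_erase N _ hiN]
          beta_reduce
          rw [if_pos rfl,
            Finset.sum_congr rfl (fun j hj => if_neg (Finset.ne_of_mem_erase hj))]
          have hers : ∑ j ∈ N.erase i, γ j = 1 - γ i := by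
            rw [← Finset.add_sum_erase N γ hiN] at hγ1; linarith
          have : ∑ j ∈ N.erase i, -γ j / γ i = -(1 - γ i)/γ i := by
            rw [← hers, ← Finset.sum_div, Finset.sum_neg_distrib]
          rw [this]
          field_simp
          ring
        · have hsplit : w i = γ i • p N i + ∑ j ∈ N.erase i, γ j • p N j := by
            rw [hwe, ← Finset.add_sum_erase N _ hiN]
          have key : p N i = (γ i)⁻¹ • (w i - ∑ j ∈ N.erase i, γ j • p N j) := by
            rw [hsplit, add_sub_cancel_right, smul_smul, inv_mul_cancel₀ hγipos.ne', one_smul]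
          beta_reduce
          rw [key]
          beta_reduce
          rw [if_pos rfl, hvi]
          have hterm : ∀ j ∈ N.erase i,
              (if j = i then (γ i)⁻¹ else -γ j / γ i) • p N j = -((γ i)⁻¹ • (γ j • p N j)) := by
            intro j hj
            rw [if_neg (Finset.ne_of_mem_erase hj), smul_smul, ← neg_smul]
            congr 1
            field_simp
          rw [Finset.sum_congr rfl hterm, Finset.sum_neg_distrib, smul_sub, Finset.smul_sum,
            ← sub_eq_add_neg]
      · have hmem : p N i ∈ convexHull ℝ (p N '' ↑(N.erase i)) := by
          by_contra hc
          exact hext (Finset.mem_filter.2 ⟨hN, hiN, hc⟩)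
        obtain ⟨μ, hμ0, hμ1, hμe⟩ :=
          exists_weights_of_mem_convexHull_image (N.erase i) (p N) (p N i) hmem
        refine ⟨fun j => if j = i then 0 else μ j, ?_, ?_, ?_⟩
        · intro j hj
          beta_reduce
          by_cases hji : j = i
          · rw [if_pos hji]
          · rw [if_neg hji]
            exact hμ0 j (Finset.mem_erase.2 ⟨hji, hj⟩)
        · beta_reduce
          rw [← Finset.add_sum_erase N _ hiN]
          beta_reduce
          rw [if_pos rfl, zero_add,
            Finset.sum_congr rfl (fun j hj => if_neg (Finset.ne_of_mem_erase hj))]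
          exact hμ1
        · beta_reduce
          rw [if_pos rfl, zero_smul, zero_add,
            Finset.sum_congr rfl (fun j hj => by rw [if_neg (Finset.ne_of_mem_erase hj)])]
          exact hμe
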